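/- Let F be a finite field with char F ≠ 2 and |F| = q. Then the number of 3×3 matrices over F with zero permanent equals the number of 3×3 matrices over F with zero determinant minus q²(q−1)⁵, i.e. |P_3(F)| = |D_3(F)| − q²(q−1)⁵. -/

import Mathlib

open Matrix

section Aux

variable {F : Type} [Field F]

private lemma vec3_eq_iff' {x y z : F} {b : Fin 3 → F} :
    ![x, y, z] = b ↔ x = b 0 ∧ y = b 1 ∧ z = b 2 := by
  constructor
  · rintro rfl; exact ⟨rfl, rfl, rfl⟩
  · rintro ⟨h1, h2, h3⟩; funext i; fin_cases i
    · exact h1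
    · exact h2
    · exact h3

/-- permanental cofactor vector for the last row -/
private def cPv (a b : Fin 3 → F) : Fin 3 → F :=
  ![a 1 * b 2 + a 2 * b 1, a 0 * b 2 + a 2 * b 0, a 0 * b 1 + a 1 * b 0]

/-- determinantal cofactor vector for the last row -/
private def cDv (a b : Fin 3 → F) : Fin 3 → F :=
  ![a 1 * b 2 - a 2 * b 1, a 2 * b 0 - a 0 * b 2, a 0 * b 1 - a 1 * b 0]

private def PPp (a b : Fin 3 → F) : Prop :=
  a 1 * b 2 + a 2 * b 1 = 0 ∧ a 0 * b 2 + a 2 * b 0 = 0 ∧ a 0 * b 1 + a 1 * b 0 = 0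

private def PDp (a b : Fin 3 → F) : Prop :=
  a 1 * b 2 - a 2 * b 1 = 0 ∧ a 2 * b 0 - a 0 * b 2 = 0 ∧ a 0 * b 1 - a 1 * b 0 = 0

private lemma cPv_zero_iff {a b : Fin 3 → F} : cPv a b = 0 ↔ PPp a b := by
  rw [cPv, vec3_eq_iff']; simp [PPp]

private lemma cDv_zero_iff {a b : Fin 3 → F} : cDv a b = 0 ↔ PDp a b := by
  rw [cDv, vec3_eq_iff']; simp [PDp]

private lemma permanent_fin3 (A : Matrix (Fin 3) (Fin 3) F) :
    A.permanent = cPv (A 0) (A 1) ⬝ᵥ A 2 := by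
  rw [Matrix.permanent]
  rw [show (Finset.univ : Finset (Equiv.Perm (Fin 3))) =
    {Equiv.refl (Fin 3), Equiv.swap 0 1, Equiv.swap 0 2, Equiv.swap 1 2,
      (Equiv.swap 0 1).trans (Equiv.swap 1 2),
      (Equiv.swap 1 2).trans (Equiv.swap 0 1)} from by decide]
  rw [Finset.sum_insert (by decide), Finset.sum_insert (by decide), Finset.sum_insert (by decide),
    Finset.sum_insert (by decide), Finset.sum_insert (by decide), Finset.sum_singleton]
  simp only [Fin.prod_univ_three, cPv, dotProduct, Fin.sum_univ_three]
  norm_num [Equiv.swap_apply_def, Fin.ext_iff]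
  simp only [Matrix.cons_val_two, Matrix.cons_val_one, Matrix.head_cons, Matrix.tail_cons]
  ring

private lemma det_fin3 (A : Matrix (Fin 3) (Fin 3) F) :
    A.det = cDv (A 0) (A 1) ⬝ᵥ A 2 := by
  rw [Matrix.det_fin_three]
  simp only [cDv, dotProduct, Fin.sum_univ_three]
  norm_num
  simp only [Matrix.cons_val_two, Matrix.cons_val_one, Matrix.head_cons, Matrix.tail_cons]
  ring

/-- `a₀ = 0` parts of the two solution sets are in bijection -/
private def equivA : {p : (Fin 3 → F) × (Fin 3 → F) // PPp p.1 p.2 ∧ p.1 0 = 0} ≃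
    {p : (Fin 3 → F) × (Fin 3 → F) // PDp p.1 p.2 ∧ p.1 0 = 0} where
  toFun := fun s => ⟨(s.1.1, ![s.1.2 0, -s.1.2 1, s.1.2 2]), by
    obtain ⟨⟨a, b⟩, ⟨h1, h2, h3⟩, ha⟩ := s
    refine ⟨⟨?_, ?_, ?_⟩, ha⟩ <;>
      simp only [Matrix.cons_val_zero, Matrix.cons_val_one, Matrix.cons_val_two,
        Matrix.head_cons, Matrix.vecTail, Function.comp, Matrix.vecHead, Matrix.cons_val_succ]
    · linear_combination h1
    · linear_combination h2 - (2 * b 2) * ha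
    · linear_combination -h3⟩
  invFun := fun s => ⟨(s.1.1, ![s.1.2 0, -s.1.2 1, s.1.2 2]), by
    obtain ⟨⟨a, b⟩, ⟨h1, h2, h3⟩, ha⟩ := s
    refine ⟨⟨?_, ?_, ?_⟩, ha⟩ <;>
      simp only [Matrix.cons_val_zero, Matrix.cons_val_one, Matrix.cons_val_two,
        Matrix.head_cons, Matrix.vecTail, Function.comp, Matrix.vecHead, Matrix.cons_val_succ]
    · linear_combination h1
    · linear_combination h2 + (2 * b 2) * ha
    · linear_combination -h3⟩
  left_inv := fun s => Subtype.ext (Prod.ext rfl (by funext i; fin_cases i <;> simp))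
  right_inv := fun s => Subtype.ext (Prod.ext rfl (by funext i; fin_cases i <;> simp))

private def equivB : {p : (Fin 3 → F) × (Fin 3 → F) // PDp p.1 p.2 ∧ p.1 0 ≠ 0} ≃
    {u : F // u ≠ 0} × (F × F × F) where
  toFun := fun s => (⟨s.1.1 0, s.2.2⟩, (s.1.1 1, s.1.1 2, s.1.2 0 / s.1.1 0))
  invFun := fun t => ⟨(![t.1.1, t.2.1, t.2.2.1],
      ![t.2.2.2 * t.1.1, t.2.2.2 * t.2.1, t.2.2.2 * t.2.2.1]), by
    refine ⟨⟨?_, ?_, ?_⟩, ?_⟩ <;>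
      simp only [Matrix.cons_val_zero, Matrix.cons_val_one, Matrix.cons_val_two,
        Matrix.head_cons, Matrix.vecTail, Function.comp, Matrix.vecHead, Matrix.cons_val_succ]
    · ring
    · ring
    · ring
    · exact t.1.2⟩
  left_inv := fun s => by
    obtain ⟨⟨a, b⟩, ⟨h1, h2, h3⟩, ha⟩ := s
    refine Subtype.ext (Prod.ext ?_ ?_)
    · exact vec3_eq_iff'.2 ⟨rfl, rfl, rfl⟩
    · refine vec3_eq_iff'.2 ⟨div_mul_cancel₀ _ ha, ?_, ?_⟩
      · field_simp
        linear_combination -h3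
      · field_simp
        linear_combination h2
  right_inv := fun t => by
    refine Prod.ext (Subtype.ext rfl) (Prod.ext rfl (Prod.ext rfl ?_))
    simp only [Matrix.cons_val_zero]
    exact mul_div_cancel_right₀ _ t.1.2

private def equivC (h2F : (2 : F) ≠ 0) :
    {p : (Fin 3 → F) × (Fin 3 → F) // PPp p.1 p.2 ∧ p.1 0 ≠ 0} ≃
    {u : F // u ≠ 0} × {v : F × F × F // v.1 * v.2.1 * v.2.2 = 0} where
  toFun := fun s => (⟨s.1.1 0, s.2.2⟩, ⟨(s.1.1 1, s.1.1 2, s.1.2 0 / s.1.1 0), by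
    obtain ⟨⟨a, b⟩, ⟨h1, h2, h3⟩, ha⟩ := s
    have key : (2 : F) * (a 1 * a 2 * b 0) = 0 := by
      linear_combination (-(a 0)) * h1 + a 1 * h2 + a 2 * h3
    have key' : a 1 * a 2 * b 0 = 0 := by
      rcases mul_eq_zero.mp key with h | h
      · exact absurd h h2F
      · exact h
    show a 1 * a 2 * (b 0 / a 0) = 0
    field_simp
    linear_combination key'⟩)
  invFun := fun t => ⟨(![t.1.1, t.2.1.1, t.2.1.2.1],
      ![t.2.1.2.2 * t.1.1, -(t.2.1.2.2 * t.2.1.1), -(t.2.1.2.2 * t.2.1.2.1)]), by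
    obtain ⟨⟨u, hu⟩, ⟨⟨x, y, tt⟩, hv⟩⟩ := t
    refine ⟨⟨?_, ?_, ?_⟩, ?_⟩ <;>
      simp only [Matrix.cons_val_zero, Matrix.cons_val_one, Matrix.cons_val_two,
        Matrix.head_cons, Matrix.vecTail, Function.comp, Matrix.vecHead, Matrix.cons_val_succ]
    · linear_combination (-2 : F) * hv
    · ring
    · ring
    · exact hu⟩
  left_inv := fun s => by
    obtain ⟨⟨a, b⟩, ⟨h1, h2, h3⟩, ha⟩ := s
    refine Subtype.ext (Prod.ext ?_ ?_)
    · exact vec3_eq_iff'.2 ⟨rfl, rfl, rfl⟩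
    · refine vec3_eq_iff'.2 ⟨div_mul_cancel₀ _ ha, ?_, ?_⟩
      · field_simp
        linear_combination -h3
      · field_simp
        linear_combination -h2
  right_inv := fun t => by
    refine Prod.ext (Subtype.ext rfl) (Subtype.ext (Prod.ext rfl (Prod.ext rfl ?_)))
    simp only [Matrix.cons_val_zero]
    exact mul_div_cancel_right₀ _ t.1.2

variable [Fintype F] [DecidableEq F]

private lemma card_dot_zero (v : Fin 3 → F) :
    Nat.card {x : Fin 3 → F // v ⬝ᵥ x = 0} =
      if v = 0 then (Fintype.card F)^3 else (Fintype.card F)^2 := by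
  classical
  split_ifs with hv
  · subst hv
    have : ∀ x : Fin 3 → F, (0 : Fin 3 → F) ⬝ᵥ x = 0 := by simp
    rw [Nat.card_congr (Equiv.subtypeUnivEquiv this)]
    simp [Nat.card_eq_fintype_card, Fintype.card_fun]
  · obtain ⟨j, hj⟩ : ∃ j, v j ≠ 0 := by
      by_contra h; push_neg at h; exact hv (funext h)
    let ℓ : (Fin 3 → F) →ₗ[F] F :=
      { toFun := fun x => v ⬝ᵥ x
        map_add' := fun x y => by simp [dotProduct_add]
        map_smul' := fun c x => by simp [dotProduct_smul] }
    have hs : Function.Surjective ℓ := fun c => by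
      refine ⟨Pi.single j ((v j)⁻¹ * c), ?_⟩
      show v ⬝ᵥ Pi.single j ((v j)⁻¹ * c) = c
      rw [dotProduct_single]
      field_simp
    have hrange : LinearMap.range ℓ = ⊤ := LinearMap.range_eq_top.2 hs
    have hrk : Module.finrank F (LinearMap.ker ℓ) = 2 := by
      have := LinearMap.finrank_range_add_finrank_ker ℓ
      rw [hrange] at this
      simp [Module.finrank_fin_fun] at this
      omega
    have hcard : Fintype.card (LinearMap.ker ℓ) = (Fintype.card F)^2 := by
      rw [Module.card_eq_pow_finrank (K := F) (V := LinearMap.ker ℓ), hrk]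
    have he : {x : Fin 3 → F // v ⬝ᵥ x = 0} ≃ LinearMap.ker ℓ :=
      Equiv.subtypeEquivRight (fun x => (LinearMap.mem_ker (f := ℓ)).symm)
    rw [Nat.card_congr he, Nat.card_eq_fintype_card, hcard]

private lemma card_split (c : (Fin 3 → F) → (Fin 3 → F) → (Fin 3 → F))
    (f : Matrix (Fin 3) (Fin 3) F → F)
    (hf : ∀ A, f A = c (A 0) (A 1) ⬝ᵥ A 2) :
    Nat.card {A : Matrix (Fin 3) (Fin 3) F // f A = 0} =
      (Fintype.card F)^8 + ((Fintype.card F)^3 - (Fintype.card F)^2) *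
        Nat.card {p : (Fin 3 → F) × (Fin 3 → F) // c p.1 p.2 = 0} := by
  classical
  set q := Fintype.card F
  have e : {A : Matrix (Fin 3) (Fin 3) F // f A = 0} ≃
      Σ p : (Fin 3 → F) × (Fin 3 → F), {x : Fin 3 → F // c p.1 p.2 ⬝ᵥ x = 0} :=
    { toFun := fun A => ⟨(A.1 0, A.1 1), ⟨A.1 2, by rw [← hf]; exact A.2⟩⟩
      invFun := fun s => ⟨Matrix.of ![s.1.1, s.1.2, s.2.1], by rw [hf]; exact s.2.2⟩
      left_inv := fun A => by
        ext i j
        fin_cases i <;> rfl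
      right_inv := fun s => by
        rcases s with ⟨⟨a, b⟩, ⟨x, hx⟩⟩
        rfl }
  rw [Nat.card_congr e, Nat.card_eq_fintype_card, Fintype.card_sigma]
  have hcard : ∀ p : (Fin 3 → F) × (Fin 3 → F),
      Fintype.card {x : Fin 3 → F // c p.1 p.2 ⬝ᵥ x = 0} =
        if c p.1 p.2 = 0 then q^3 else q^2 := fun p => by
    rw [← Nat.card_eq_fintype_card]; exact card_dot_zero _
  simp only [hcard]
  rw [Finset.sum_ite, Finset.sum_const, Finset.sum_const, smul_eq_mul, smul_eq_mul]
  set N := (Finset.univ.filter (fun p : (Fin 3 → F) × (Fin 3 → F) => c p.1 p.2 = 0)).card with hN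
  have hNcard : Nat.card {p : (Fin 3 → F) × (Fin 3 → F) // c p.1 p.2 = 0} = N := by
    rw [Nat.card_eq_fintype_card, Fintype.card_subtype]
  have htot : N + (Finset.univ.filter
      (fun p : (Fin 3 → F) × (Fin 3 → F) => ¬ c p.1 p.2 = 0)).card = q^6 := by
    rw [hN, Finset.card_filter_add_card_filter_not]
    simp [Fintype.card_prod, Fintype.card_fun, q]
    ring
  have hNle : N ≤ q^6 := le_of_add_le_left htot.le
  have hcompl : (Finset.univ.filter
      (fun p : (Fin 3 → F) × (Fin 3 → F) => ¬ c p.1 p.2 = 0)).card = q^6 - N := by omega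
  rw [hNcard, hcompl]
  have hq23 : q^2 ≤ q^3 := Nat.pow_le_pow_right Fintype.card_pos (by norm_num)
  zify [hNle, hq23]
  ring

private lemma card_ne_zero_sub : Nat.card {u : F // u ≠ 0} = Fintype.card F - 1 := by
  rw [Nat.card_congr unitsEquivNeZero.symm, Nat.card_eq_fintype_card, Fintype.card_units]

private lemma card_triple_mul_zero :
    Nat.card {v : F × F × F // v.1 * v.2.1 * v.2.2 = 0} =
      (Fintype.card F)^3 - (Fintype.card F - 1)^3 := by
  have e : {v : F × F × F // ¬ v.1 * v.2.1 * v.2.2 = 0} ≃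
      {u : F // u ≠ 0} × {u : F // u ≠ 0} × {u : F // u ≠ 0} :=
    { toFun := fun v => ⟨⟨v.1.1, fun h => v.2 (by rw [h]; ring)⟩,
        ⟨v.1.2.1, fun h => v.2 (by rw [h]; ring)⟩, ⟨v.1.2.2, fun h => v.2 (by rw [h]; ring)⟩⟩
      invFun := fun u => ⟨(u.1.1, u.2.1.1, u.2.2.1),
        mul_ne_zero (mul_ne_zero u.1.2 u.2.1.2) u.2.2.2⟩
      left_inv := fun v => rfl
      right_inv := fun u => rfl }
  have h1 : Nat.card {v : F × F × F // ¬ v.1 * v.2.1 * v.2.2 = 0} = (Fintype.card F - 1)^3 := by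
    rw [Nat.card_congr e, Nat.card_prod, Nat.card_prod, card_ne_zero_sub]
    ring
  have h2 : Fintype.card {v : F × F × F // ¬ v.1 * v.2.1 * v.2.2 = 0} =
      Fintype.card (F × F × F) - Fintype.card {v : F × F × F // v.1 * v.2.1 * v.2.2 = 0} :=
    Fintype.card_subtype_compl _
  have h3 : Fintype.card {v : F × F × F // v.1 * v.2.1 * v.2.2 = 0} ≤ Fintype.card (F × F × F) :=
    Fintype.card_subtype_le _
  rw [Nat.card_eq_fintype_card] at h1 ⊢
  have h4 : Fintype.card (F × F × F) = (Fintype.card F)^3 := by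
    simp [Fintype.card_prod]; ring
  omega

private lemma card_subtype_split {α : Type*} [Fintype α] (Q R : α → Prop)
    [DecidablePred Q] [DecidablePred R] :
    Nat.card {x // Q x} = Nat.card {x // Q x ∧ R x} + Nat.card {x // Q x ∧ ¬ R x} := by
  simp only [Nat.card_eq_fintype_card, Fintype.card_subtype]
  rw [← Finset.filter_filter, ← Finset.filter_filter]
  exact (Finset.card_filter_add_card_filter_not (s := Finset.univ.filter Q) (p := R)).symm

private lemma card_cD_eq (h2F : (2 : F) ≠ 0) :
    Nat.card {p : (Fin 3 → F) × (Fin 3 → F) // cDv p.1 p.2 = 0} =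
      Nat.card {p : (Fin 3 → F) × (Fin 3 → F) // cPv p.1 p.2 = 0} +
        (Fintype.card F - 1)^4 := by
  classical
  set q := Fintype.card F with hq
  have hD : Nat.card {p : (Fin 3 → F) × (Fin 3 → F) // cDv p.1 p.2 = 0} =
      Nat.card {p : (Fin 3 → F) × (Fin 3 → F) // PDp p.1 p.2} :=
    Nat.card_congr (Equiv.subtypeEquivRight (fun p => cDv_zero_iff))
  have hP : Nat.card {p : (Fin 3 → F) × (Fin 3 → F) // cPv p.1 p.2 = 0} =
      Nat.card {p : (Fin 3 → F) × (Fin 3 → F) // PPp p.1 p.2} :=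
    Nat.card_congr (Equiv.subtypeEquivRight (fun p => cPv_zero_iff))
  rw [hD, hP]
  rw [card_subtype_split (fun p : (Fin 3 → F) × (Fin 3 → F) => PDp p.1 p.2)
      (fun p => p.1 0 = 0),
    card_subtype_split (fun p : (Fin 3 → F) × (Fin 3 → F) => PPp p.1 p.2)
      (fun p => p.1 0 = 0)]
  have hA : Nat.card {p : (Fin 3 → F) × (Fin 3 → F) // PDp p.1 p.2 ∧ p.1 0 = 0} =
      Nat.card {p : (Fin 3 → F) × (Fin 3 → F) // PPp p.1 p.2 ∧ p.1 0 = 0} :=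
    (Nat.card_congr equivA.symm)
  have hB : Nat.card {p : (Fin 3 → F) × (Fin 3 → F) // PDp p.1 p.2 ∧ ¬ p.1 0 = 0} =
      (q - 1) * q^3 := by
    rw [Nat.card_congr equivB, Nat.card_prod, card_ne_zero_sub, Nat.card_eq_fintype_card]
    have h4 : Fintype.card (F × F × F) = q ^ 3 := by
      simp [Fintype.card_prod]; ring
    rw [h4]
  have hC : Nat.card {p : (Fin 3 → F) × (Fin 3 → F) // PPp p.1 p.2 ∧ ¬ p.1 0 = 0} =
      (q - 1) * (q^3 - (q - 1)^3) := by
    rw [Nat.card_congr (equivC h2F), Nat.card_prod, card_ne_zero_sub, card_triple_mul_zero]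
  rw [hA, hB, hC]
  have hcube : (q - 1)^3 ≤ q^3 := Nat.pow_le_pow_left (Nat.sub_le q 1) 3
  have e1 : (q - 1) * (q^3 - (q - 1)^3) + (q - 1) * (q - 1)^3 = (q - 1) * q^3 := by
    rw [← Nat.mul_add, Nat.sub_add_cancel hcube]
  have e2 : (q - 1)^4 = (q - 1) * (q - 1)^3 := by ring
  omega

end Aux

/-- For a finite field `F` with `char F ≠ 2` and `|F| = q`,
`|P₃(F)| = |D₃(F)| − q²(q−1)⁵`, where `P₃(F)` is the set of `3×3` matrices with zero
permanent and `D₃(F)` the set of `3×3` matrices with zero determinant. -/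
theorem card_permanent_zero_three_eq (F : Type) [Field F] [Fintype F]
    (hch : ringChar F ≠ 2) :
    (Nat.card {A : Matrix (Fin 3) (Fin 3) F // A.permanent = 0} : ℤ) =
      (Nat.card {A : Matrix (Fin 3) (Fin 3) F // A.det = 0} : ℤ)
        - (Fintype.card F : ℤ) ^ 2 * ((Fintype.card F : ℤ) - 1) ^ 5 := by
  classical
  have h2F : (2 : F) ≠ 0 := Ring.two_ne_zero hch
  set q := Fintype.card F with hq
  have hP := card_split (F := F) cPv Matrix.permanent permanent_fin3
  have hD := card_split (F := F) cDv Matrix.det det_fin3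
  rw [hP, hD, card_cD_eq h2F]
  rw [← hq]
  have hq1 : 1 ≤ q := Fintype.card_pos
  have hq23 : q^2 ≤ q^3 := Nat.pow_le_pow_right Fintype.card_pos (by norm_num)
  push_cast [Nat.cast_sub hq23, Nat.cast_sub hq1]
  ring
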